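/- Let g₁, g₂ be hyperbolic isometries of a simplicial tree whose axes overlap, with the same orientation, in a path of length Δ ≥ min{l(g₁), l(g₂)}, and suppose l(g₁) ≤ l(g₂). Then l(g₁²g₂⁻¹) ≤ l(g₁g₂) − l(g₁). -/
import Mathlib


open SimpleGraph

variable {V : Type*}

/-- Translation length of a graph automorphism of `G` (min displacement over vertices). -/
noncomputable def ell (G : SimpleGraph V) (g : G ≃g G) : ℕ :=
  sInf (Set.range fun x => G.dist x (g x))

/-- The set of vertices realizing the minimal displacement (the axis, for hyperbolic `g`). -/
def axisSet (G : SimpleGraph V) (g : G ≃g G) : Set V :=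
  {x | G.dist x (g x) = ell G g}

/-- `g` acts without inversions: no edge is flipped. -/
def noInv (G : SimpleGraph V) (g : G ≃g G) : Prop :=
  ∀ x y, G.Adj x y → ¬(g x = y ∧ g y = x)

/-- The segment (geodesic) between `p` and `q` in the tree. -/
def seg (G : SimpleGraph V) (p q : V) : Set V :=
  {x | G.dist p x + G.dist x q = G.dist p q}

/-- The open segment between `p` and `q` (endpoints removed). -/
def openSeg (G : SimpleGraph V) (p q : V) : Set V :=
  {x | x ∈ seg G p q ∧ x ≠ p ∧ x ≠ q}

/-- Distance from a vertex to a set of vertices. -/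
noncomputable def distToSet (G : SimpleGraph V) (x : V) (S : Set V) : ℕ :=
  sInf (G.dist x '' S)

/-- Distance between two sets of vertices. -/
noncomputable def setDist (G : SimpleGraph V) (S T : Set V) : ℕ :=
  sInf (Set.image2 G.dist S T)

/-- The projection of `B` onto `A`: points of `A` at minimal distance from `B`. -/
noncomputable def projOn (G : SimpleGraph V) (A B : Set V) : Set V :=
  {x | x ∈ A ∧ distToSet G x B = setDist G A B}

/-- `g` translates the vertex `p` (assumed on its axis) towards the vertex `q`. -/
noncomputable def translatesToward (G : SimpleGraph V) (g : G ≃g G) (p q : V) : Prop :=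
  (G.dist (g p) q : ℤ) = |(G.dist p q : ℤ) - (ell G g : ℤ)|

namespace TreeHelper

variable {G : SimpleGraph V}

lemma iso_dist (hc : G.Connected) (g : G ≃g G) (x y : V) :
    G.dist (g x) (g y) = G.dist x y := by
  have key : ∀ (g : G ≃g G) (x y : V), G.dist (g x) (g y) ≤ G.dist x y := by
    intro g x y
    obtain ⟨w, hw⟩ := hc.exists_walk_length_eq_dist x y
    calc G.dist (g x) (g y) ≤ (w.map g.toHom).length := SimpleGraph.dist_le _
      _ = w.length := w.length_map _
      _ = _ := hw
  refine le_antisymm (key g x y) ?_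
  have := key g⁻¹ (g x) (g y)
  simpa using this

lemma ell_le (g : G ≃g G) (x : V) : ell G g ≤ G.dist x (g x) :=
  Nat.sInf_le ⟨x, rfl⟩

lemma mem_seg_left (p q : V) : p ∈ seg G p q := by
  simp [seg]

lemma dist_getVert_le (hc : G.Connected) {a b : V} (w : G.Walk a b) (i : ℕ) :
    G.dist a (w.getVert i) ≤ i := by
  induction w generalizing i with
  | nil =>
    rename_i u
    rw [show (SimpleGraph.Walk.nil : G.Walk u u).getVert i = u from
      SimpleGraph.Walk.getVert_of_length_le _ (by simp)]
    simp [SimpleGraph.dist_self]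
  | @cons u v b hadj w ih =>
    cases i with
    | zero => simp
    | succ i =>
      rw [SimpleGraph.Walk.getVert_cons_succ]
      calc G.dist u (w.getVert i) ≤ G.dist u v + G.dist v (w.getVert i) :=
            hc.dist_triangle
        _ ≤ 1 + i := by
            have h1 : G.dist u v ≤ 1 :=
              SimpleGraph.dist_le (SimpleGraph.Walk.cons hadj SimpleGraph.Walk.nil)
            have := ih i
            omega
        _ = i + 1 := by omega

lemma dist_getVert_right_le {a b : V} (w : G.Walk a b) (i : ℕ) :
    G.dist (w.getVert i) b ≤ w.length - i := by
  induction w generalizing i with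
  | nil =>
    rename_i u
    rw [show (SimpleGraph.Walk.nil : G.Walk u u).getVert i = u from
      SimpleGraph.Walk.getVert_of_length_le _ (by simp)]
    simp [SimpleGraph.dist_self]
  | @cons u v b hadj w ih =>
    cases i with
    | zero =>
      simp only [SimpleGraph.Walk.getVert_zero]
      have : G.dist u b ≤ (SimpleGraph.Walk.cons hadj w).length :=
        SimpleGraph.dist_le _
      omega
    | succ i =>
      rw [SimpleGraph.Walk.getVert_cons_succ]
      have := ih i
      simp only [SimpleGraph.Walk.length_cons]
      omega

lemma shortest_getVert (hc : G.Connected) {a b : V} {w : G.Walk a b}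
    (hw : w.length = G.dist a b) {i : ℕ} (hi : i ≤ w.length) :
    G.dist a (w.getVert i) = i ∧ G.dist (w.getVert i) b = w.length - i := by
  have h1 := dist_getVert_le hc w i
  have h2 := dist_getVert_right_le w i
  have h3 : G.dist a b ≤ G.dist a (w.getVert i) + G.dist (w.getVert i) b :=
    hc.dist_triangle
  omega


lemma walk_unique (hT : G.IsTree) {a b : V} {w w' : G.Walk a b}
    (h : w.IsPath) (h' : w'.IsPath) : w = w' := by
  obtain ⟨u, -, hu⟩ := hT.existsUnique_path a b
  rw [hu w h, hu w' h']

lemma concat_path {a u v : V} {p : G.Walk a u} (hp : p.IsPath) (h : G.Adj u v)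
    (hv : v ∉ p.support) : (p.concat h).IsPath := by
  rw [← SimpleGraph.Walk.isPath_reverse_iff, SimpleGraph.Walk.reverse_concat]
  exact SimpleGraph.Walk.IsPath.cons hp.reverse
    (by rwa [SimpleGraph.Walk.support_reverse, List.mem_reverse])

lemma concat_getVert_penult {a u v : V} (p : G.Walk a u) (h : G.Adj u v) :
    (p.concat h).getVert p.length = u := by
  rw [SimpleGraph.Walk.concat_eq_append, SimpleGraph.Walk.getVert_append]
  simp

lemma seg_getVert (hT : G.IsTree) {a b x : V} (hx : x ∈ seg G a b)
    {w : G.Walk a b} (hw : w.length = G.dist a b) :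
    x = w.getVert (G.dist a x) := by
  have hc := hT.isConnected
  obtain ⟨w1, hw1⟩ := hc.exists_walk_length_eq_dist a x
  obtain ⟨w2, hw2⟩ := hc.exists_walk_length_eq_dist x b
  have hxseg : G.dist a x + G.dist x b = G.dist a b := hx
  have hlen : (w1.append w2).length = G.dist a b := by
    rw [SimpleGraph.Walk.length_append, hw1, hw2, hxseg]
  have hWpath : (w1.append w2).IsPath :=
    SimpleGraph.Walk.isPath_of_length_eq_dist _ hlen
  have hwpath : w.IsPath := SimpleGraph.Walk.isPath_of_length_eq_dist _ hw
  have heq : w = w1.append w2 := walk_unique hT hwpath hWpath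
  rw [heq, SimpleGraph.Walk.getVert_append]
  simp [hw1]

lemma seg_unique (hT : G.IsTree) {a b x y : V} (hx : x ∈ seg G a b)
    (hy : y ∈ seg G a b) (hd : G.dist a x = G.dist a y) : x = y := by
  obtain ⟨w, hw⟩ := hT.isConnected.exists_walk_length_eq_dist a b
  rw [seg_getVert hT hx hw, seg_getVert hT hy hw, hd]

lemma dist_getVert_getVert (hc : G.Connected) {a b : V} (w : G.Walk a b)
    {i j : ℕ} (hij : i ≤ j) :
    G.dist (w.getVert i) (w.getVert j) ≤ j - i := by
  induction j, hij using Nat.le_induction with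
  | base => simp [SimpleGraph.dist_self]
  | succ j hj ih =>
    have h1 : G.dist (w.getVert j) (w.getVert (j+1)) ≤ 1 := by
      by_cases hjl : j < w.length
      · exact le_of_eq (SimpleGraph.dist_eq_one_iff_adj.mpr (w.adj_getVert_succ hjl))
      · rw [SimpleGraph.Walk.getVert_of_length_le _ (by omega : w.length ≤ j),
          SimpleGraph.Walk.getVert_of_length_le _ (by omega : w.length ≤ j+1)]
        simp [SimpleGraph.dist_self]
    have h2 : G.dist (w.getVert i) (w.getVert (j+1)) ≤
        G.dist (w.getVert i) (w.getVert j) + G.dist (w.getVert j) (w.getVert (j+1)) :=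
      hc.dist_triangle
    omega

/-- collinearity: two points on a segment, ordered by distance from `a`. -/
lemma seg_dist_sub (hT : G.IsTree) {a b x y : V} (hx : x ∈ seg G a b)
    (hy : y ∈ seg G a b) (h : G.dist a x ≤ G.dist a y) :
    G.dist a x + G.dist x y = G.dist a y := by
  have hc := hT.isConnected
  obtain ⟨w, hw⟩ := hc.exists_walk_length_eq_dist a b
  have hgx := seg_getVert hT hx hw
  have hgy := seg_getVert hT hy hw
  have hup : G.dist x y ≤ G.dist a y - G.dist a x := by
    have h2 := dist_getVert_getVert hc w h
    rwa [← hgx, ← hgy] at h2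
  have hlo : G.dist a y ≤ G.dist a x + G.dist x y := hc.dist_triangle
  omega


lemma adj_dist_ne (hT : G.IsTree) {a u v : V} (h : G.Adj u v) :
    G.dist a u ≠ G.dist a v := by
  intro heq
  have hc := hT.isConnected
  obtain ⟨w1, hw1⟩ := hc.exists_walk_length_eq_dist a u
  have hp1 : w1.IsPath := SimpleGraph.Walk.isPath_of_length_eq_dist _ hw1
  have hv : v ∉ w1.support := by
    intro hv
    obtain ⟨i, hgi, hil⟩ := SimpleGraph.Walk.mem_support_iff_exists_getVert.mp hv
    have hdi := (shortest_getVert hc hw1 hil).1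
    rw [hgi] at hdi
    have hine : i ≠ w1.length := by
      intro e
      rw [e, SimpleGraph.Walk.getVert_length] at hgi
      exact h.ne hgi
    omega
  have hW : (w1.concat h).IsPath := concat_path hp1 h hv
  obtain ⟨w2, hw2⟩ := hc.exists_walk_length_eq_dist a v
  have hp2 : w2.IsPath := SimpleGraph.Walk.isPath_of_length_eq_dist _ hw2
  have heqw : w1.concat h = w2 := walk_unique hT hW hp2
  have hlen : (w1.concat h).length = w2.length := by rw [heqw]
  rw [SimpleGraph.Walk.length_concat] at hlen
  omega

lemma localmax_absurd (hT : G.IsTree) {b c aa : V} {w : G.Walk b c}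
    (hw : w.length = G.dist b c) {k : ℕ} (hk0 : 0 < k) (hkn : k < w.length)
    (hm1 : G.dist aa (w.getVert (k-1)) + 1 = G.dist aa (w.getVert k))
    (hm2 : G.dist aa (w.getVert (k+1)) + 1 = G.dist aa (w.getVert k)) : False := by
  have hc := hT.isConnected
  obtain ⟨k', rfl⟩ : ∃ k', k = k' + 1 := ⟨k - 1, by omega⟩
  simp only [Nat.add_sub_cancel] at hm1
  set u := w.getVert k' with hu
  set v := w.getVert (k' + 1) with hvv
  set x := w.getVert (k' + 1 + 1) with hx
  have adj1 : G.Adj u v := w.adj_getVert_succ (by omega)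
  have adj2 : G.Adj v x := w.adj_getVert_succ (by omega)
  have hux : u ≠ x := by
    intro e
    have h1 := (shortest_getVert hc hw (by omega : k' ≤ w.length)).1
    have h2 := (shortest_getVert hc hw (by omega : k' + 1 + 1 ≤ w.length)).1
    rw [← hu] at h1
    rw [← hx] at h2
    rw [e] at h1
    omega
  set m := G.dist aa u with hm
  have hax : G.dist aa x = m := by omega
  obtain ⟨P1, hP1⟩ := hc.exists_walk_length_eq_dist aa u
  obtain ⟨P2, hP2⟩ := hc.exists_walk_length_eq_dist aa x
  have hp1 : P1.IsPath := SimpleGraph.Walk.isPath_of_length_eq_dist _ hP1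
  have hp2 : P2.IsPath := SimpleGraph.Walk.isPath_of_length_eq_dist _ hP2
  have hv1 : v ∉ P1.support := by
    intro hvs
    obtain ⟨i, hgi, hil⟩ := SimpleGraph.Walk.mem_support_iff_exists_getVert.mp hvs
    have := dist_getVert_le hc P1 i
    rw [hgi] at this
    omega
  have hv2 : v ∉ P2.support := by
    intro hvs
    obtain ⟨i, hgi, hil⟩ := SimpleGraph.Walk.mem_support_iff_exists_getVert.mp hvs
    have := dist_getVert_le hc P2 i
    rw [hgi] at this
    omega
  have hW1 : (P1.concat adj1.symm.symm).IsPath := concat_path hp1 _ hv1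
  have hW2 : (P2.concat adj2.symm).IsPath := concat_path hp2 _ hv2
  have heqw : P1.concat adj1.symm.symm = P2.concat adj2.symm := walk_unique hT hW1 hW2
  have e1 : (P1.concat adj1.symm.symm).getVert P1.length = u := concat_getVert_penult _ _
  have e2 : (P2.concat adj2.symm).getVert P2.length = x := concat_getVert_penult _ _
  rw [heqw] at e1
  rw [hP1, hP2, hax, ← hm] at *
  exact hux (e1.symm.trans e2 ▸ rfl)


lemma valley (f : ℕ → ℕ) (n : ℕ)
    (hstep : ∀ i, i < n → f (i+1) = f i + 1 ∨ f i = f (i+1) + 1)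
    (hnomax : ∀ k, 0 < k → k < n → ¬(f (k-1) + 1 = f k ∧ f (k+1) + 1 = f k)) :
    ∃ t, t ≤ n ∧ f t + t = f 0 ∧ f t + (n - t) = f n := by
  classical
  obtain ⟨t, htmem, htmin⟩ := Finset.exists_min_image (Finset.range (n+1)) f
    ⟨0, Finset.mem_range.mpr (by omega)⟩
  have htn : t ≤ n := by have := Finset.mem_range.mp htmem; omega
  have htmin' : ∀ i, i ≤ n → f t ≤ f i := fun i hi =>
    htmin i (Finset.mem_range.mpr (by omega))
  have noUpDown : ∀ i i', i < i' → i' < n → f (i+1) = f i + 1 →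
      f i' = f (i'+1) + 1 → False := by
    intro i i' hii hi'n hup hdown
    have hex : ∃ j, i < j ∧ j < n ∧ f (j+1) + 1 = f j := ⟨i', hii, hi'n, by omega⟩
    obtain ⟨hij, hjn, hdj⟩ := Nat.find_spec hex
    rcases Nat.lt_or_ge i (Nat.find hex - 1) with hcase | hcase
    · have hstepj := hstep (Nat.find hex - 1) (by omega)
      have hnd := Nat.find_min hex (m := Nat.find hex - 1) (by omega)
      have h3 : Nat.find hex - 1 + 1 = Nat.find hex := by omega
      rw [h3] at hstepj hnd
      rcases hstepj with hu | hd
      · exact hnomax (Nat.find hex) (by omega) hjn ⟨by omega, hdj⟩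
      · exact hnd ⟨hcase, by omega, by omega⟩
    · have h5 : Nat.find hex = i + 1 := by omega
      rw [h5] at hdj
      refine hnomax (i+1) (by omega) (by omega) ⟨?_, hdj⟩
      simpa using hup.symm
  have hdownpre : ∀ i, i < t → f i = f (i+1) + 1 := by
    intro i hit
    rcases hstep i (by omega) with hup | hdown
    · exfalso
      have hex : ∃ j, i < j ∧ j < t ∧ f j = f (j+1) + 1 := by
        by_contra hno
        push_neg at hno
        have mono : ∀ m, i + 1 ≤ m → m ≤ t → f (i+1) ≤ f m := by
          intro m hm
          induction m, hm using Nat.le_induction with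
          | base => intro _; exact le_refl _
          | succ m hm ih =>
            intro hmt
            have hfm := ih (by omega)
            rcases hstep m (by omega) with hu | hd
            · omega
            · exact absurd hd (hno m (by omega) (by omega))
        have h1 := mono t (by omega) (le_refl t)
        have h2 := htmin' i (by omega)
        omega
      obtain ⟨j, hij, hjt, hdj⟩ := hex
      exact noUpDown i j hij (by omega) hup hdj
    · exact hdown
  have huppost : ∀ i, t ≤ i → i < n → f (i+1) = f i + 1 := by
    intro i hti hin
    rcases hstep i hin with hup | hdown
    · exact hup
    · exfalso
      have hex : ∃ j, t ≤ j ∧ j < i ∧ f (j+1) = f j + 1 := by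
        by_contra hno
        push_neg at hno
        have mono : ∀ m, t ≤ m → m ≤ i → f m ≤ f t := by
          intro m hm
          induction m, hm using Nat.le_induction with
          | base => intro _; exact le_refl _
          | succ m hm ih =>
            intro hmt
            have hfm := ih (by omega)
            rcases hstep m (by omega) with hu | hd
            · exact absurd hu (hno m (by omega) (by omega))
            · omega
        have h1 := mono i (by omega) (le_refl i)
        have h2 := htmin' (i+1) (by omega)
        omega
      obtain ⟨j, htj, hji, huj⟩ := hex
      exact noUpDown j i hji hin huj hdown
  have hleft : ∀ m, m ≤ t → f (t - m) = f t + m := by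
    intro m
    induction m with
    | zero => intro _; simp
    | succ m ih =>
      intro hm
      have h2 := hdownpre (t - (m+1)) (by omega)
      have h3 : t - (m+1) + 1 = t - m := by omega
      rw [h3] at h2
      rw [h2, ih (by omega)]
      omega
  have hright : ∀ m, t + m ≤ n → f (t + m) = f t + m := by
    intro m
    induction m with
    | zero => intro _; simp
    | succ m ih =>
      intro hm
      have h2 := huppost (t + m) (by omega) (by omega)
      have h3 : t + m + 1 = t + (m+1) := by omega
      rw [h3] at h2
      rw [h2, ih (by omega)]
      omega
  have e1 : f 0 = f t + t := by
    have := hleft t (le_refl t)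
    simpa using this
  have e2 : f n = f t + (n - t) := by
    have := hright (n - t) (by omega)
    have h3 : t + (n - t) = n := by omega
    rw [h3] at this
    exact this
  exact ⟨t, htn, by omega, by omega⟩


lemma exists_median (hT : G.IsTree) (a b c : V) :
    ∃ m : V, (G.dist b m + G.dist m c = G.dist b c) ∧
      (G.dist a m + G.dist m b = G.dist a b) ∧
      (G.dist a m + G.dist m c = G.dist a c) := by
  have hc := hT.isConnected
  obtain ⟨w, hw⟩ := hc.exists_walk_length_eq_dist b c
  set f : ℕ → ℕ := fun i => G.dist a (w.getVert i) with hf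
  have hstep : ∀ i, i < w.length → f (i+1) = f i + 1 ∨ f i = f (i+1) + 1 := by
    intro i hi
    have hadj : G.Adj (w.getVert i) (w.getVert (i+1)) := w.adj_getVert_succ hi
    have hne : f i ≠ f (i+1) := adj_dist_ne hT hadj
    have hone : G.dist (w.getVert i) (w.getVert (i+1)) = 1 :=
      SimpleGraph.dist_eq_one_iff_adj.mpr hadj
    have t1 : f (i+1) ≤ f i + G.dist (w.getVert i) (w.getVert (i+1)) := hc.dist_triangle
    have t2 : f i ≤ f (i+1) + G.dist (w.getVert (i+1)) (w.getVert i) := hc.dist_triangle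
    rw [SimpleGraph.dist_comm] at t2
    rw [hone] at t1 t2
    omega
  have hnomax : ∀ k, 0 < k → k < w.length →
      ¬(f (k-1) + 1 = f k ∧ f (k+1) + 1 = f k) := by
    intro k hk0 hkn hpair
    exact localmax_absurd hT hw hk0 hkn hpair.1 hpair.2
  obtain ⟨t, htn, e1, e2⟩ := valley f w.length hstep hnomax
  simp only [hf] at e1 e2
  rw [SimpleGraph.Walk.getVert_zero] at e1
  rw [SimpleGraph.Walk.getVert_length] at e2
  have h1 := (shortest_getVert hc hw htn).1
  have h2 := (shortest_getVert hc hw htn).2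
  refine ⟨w.getVert t, ?_, ?_, ?_⟩
  · omega
  · have hcm : G.dist (w.getVert t) b = G.dist b (w.getVert t) := SimpleGraph.dist_comm
    omega
  · omega

lemma four_point (hT : G.IsTree) (a b c d : V) :
    G.dist a b + G.dist c d ≤
      max (G.dist a c + G.dist b d) (G.dist a d + G.dist b c) := by
  have hc := hT.isConnected
  have key : ∀ c d m₁ m₂ : V,
      (G.dist a m₁ + G.dist m₁ b = G.dist a b) →
      (G.dist c m₁ + G.dist m₁ a = G.dist c a) →
      (G.dist c m₁ + G.dist m₁ b = G.dist c b) →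
      (G.dist a m₂ + G.dist m₂ b = G.dist a b) →
      (G.dist d m₂ + G.dist m₂ a = G.dist d a) →
      (G.dist d m₂ + G.dist m₂ b = G.dist d b) →
      G.dist a m₁ ≤ G.dist a m₂ →
      G.dist a b + G.dist c d ≤ G.dist a d + G.dist b c := by
    intro c d m₁ m₂ h1 h2 h3 h4 h5 h6 hle
    have hm1 : m₁ ∈ seg G a b := h1
    have hm2 : m₂ ∈ seg G a b := h4
    have hCL : G.dist a m₁ + G.dist m₁ m₂ = G.dist a m₂ := seg_dist_sub hT hm1 hm2 hle
    have t1 : G.dist c d ≤ G.dist c m₁ + G.dist m₁ d := hc.dist_triangle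
    have t2 : G.dist m₁ d ≤ G.dist m₁ m₂ + G.dist m₂ d := hc.dist_triangle
    have c1 : G.dist m₂ d = G.dist d m₂ := SimpleGraph.dist_comm
    have c2 : G.dist c a = G.dist a c := SimpleGraph.dist_comm
    have c3 : G.dist d a = G.dist a d := SimpleGraph.dist_comm
    have c4 : G.dist c b = G.dist b c := SimpleGraph.dist_comm
    have c5 : G.dist d b = G.dist b d := SimpleGraph.dist_comm
    have c6 : G.dist m₁ a = G.dist a m₁ := SimpleGraph.dist_comm
    have c7 : G.dist m₂ a = G.dist a m₂ := SimpleGraph.dist_comm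
    omega
  obtain ⟨m₁, hm1a, hm1b, hm1c⟩ := exists_median hT c a b
  obtain ⟨m₂, hm2a, hm2b, hm2c⟩ := exists_median hT d a b
  rcases le_total (G.dist a m₁) (G.dist a m₂) with hle | hle
  · have := key c d m₁ m₂ hm1a hm1b hm1c hm2a hm2b hm2c hle
    have hcm : G.dist c d = G.dist d c := SimpleGraph.dist_comm
    exact le_max_of_le_right this
  · have := key d c m₂ m₁ hm2a hm2b hm2c hm1a hm1b hm1c hle
    have hcm : G.dist c d = G.dist d c := SimpleGraph.dist_comm
    have hcm2 : G.dist b d = G.dist d b := SimpleGraph.dist_comm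
    refine le_max_of_le_left ?_
    have hcm3 : G.dist a c + G.dist b d = G.dist a c + G.dist b d := rfl
    omega

lemma joint (hT : G.IsTree) {a p r c : V} (hmid : 0 < G.dist p r)
    (h1 : G.dist a p + G.dist p r = G.dist a r)
    (h2 : G.dist p r + G.dist r c = G.dist p c) :
    G.dist a c = G.dist a p + G.dist p r + G.dist r c := by
  have hc := hT.isConnected
  have hfp := four_point hT a r p c
  have htr : G.dist a c ≤ G.dist a p + G.dist p c := hc.dist_triangle
  have hcm : G.dist r p = G.dist p r := SimpleGraph.dist_comm
  rcases le_max_iff.mp hfp with h | h <;> omega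


lemma dist_sq (hT : G.IsTree) {g : G ≃g G} (hninv : noInv G g) (hpos : 0 < ell G g)
    {a : V} (ha : G.dist a (g a) = ell G g) :
    G.dist a (g (g a)) = 2 * ell G g := by
  have hc := hT.isConnected
  obtain ⟨m, hm1, hm2, hm3⟩ := exists_median hT a (g a) (g (g a))
  have hgg : G.dist (g a) (g (g a)) = ell G g := by
    rw [iso_dist hc g]; exact ha
  have hmseg : m ∈ seg G (g a) (g (g a)) := by
    show G.dist (g a) m + G.dist m (g (g a)) = G.dist (g a) (g (g a))
    have : G.dist (g a) m = G.dist m (g a) := SimpleGraph.dist_comm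
    omega
  have hgmseg : g m ∈ seg G (g a) (g (g a)) := by
    show G.dist (g a) (g m) + G.dist (g m) (g (g a)) = G.dist (g a) (g (g a))
    rw [iso_dist hc g, iso_dist hc g, hgg, ← ha]
    exact hm2
  have hdm : G.dist (g a) (g m) = G.dist a m := iso_dist hc g a m
  have hdm2 : G.dist (g a) m = G.dist m (g a) := SimpleGraph.dist_comm
  -- abbreviations
  have hsum : G.dist a m + G.dist m (g a) = ell G g := by rw [ha] at hm2; exact hm2
  rcases le_total (G.dist (g a) m) (G.dist (g a) (g m)) with hle | hle
  · have hCL := seg_dist_sub hT hmseg hgmseg hle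
    have hell := ell_le g m
    have hk : G.dist m (g a) = 0 := by omega
    have hma : m = g a := (hc.dist_eq_zero_iff).mp hk
    -- dist a g²a = dist a m + dist m g²a
    have : G.dist m (g (g a)) = ell G g := by
      rw [hma]; exact hgg
    omega
  · have hCL := seg_dist_sub hT hgmseg hmseg hle
    have hell := ell_le g m
    have hgm : G.dist m (g m) = G.dist (g m) m := SimpleGraph.dist_comm
    have hα : G.dist a m = 0 := by omega
    have hk : G.dist m (g a) = ell G g := by omega
    have hma : a = m := (hc.dist_eq_zero_iff).mp hα
    -- then dist m g²a = 0, so g (g a) = a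
    have hz : G.dist m (g (g a)) = 0 := by omega
    have hgga : m = g (g a) := (hc.dist_eq_zero_iff).mp hz
    have hfix : g (g a) = a := by rw [← hgga, ← hma]
    -- inversion argument
    exfalso
    obtain ⟨w, hw⟩ := hc.exists_walk_length_eq_dist a (g a)
    have hwl : w.length = ell G g := by rw [hw, ha]
    have key : ∀ i, i ≤ w.length → g (w.getVert i) = w.getVert (w.length - i) := by
      intro i hi
      have hgv := shortest_getVert hc hw hi
      have hd1 : G.dist a (g (w.getVert i)) = w.length - i := by
        calc G.dist a (g (w.getVert i)) = G.dist (g (g a)) (g (w.getVert i)) := by rw [hfix]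
          _ = G.dist (g a) (w.getVert i) := iso_dist hc g _ _
          _ = G.dist (w.getVert i) (g a) := SimpleGraph.dist_comm
          _ = w.length - i := hgv.2
      have hd2 : G.dist (g (w.getVert i)) (g a) = i := by
        calc G.dist (g (w.getVert i)) (g a) = G.dist (w.getVert i) a := iso_dist hc g _ _
          _ = G.dist a (w.getVert i) := SimpleGraph.dist_comm
          _ = i := hgv.1
      have hmem : g (w.getVert i) ∈ seg G a (g a) := by
        show G.dist a (g (w.getVert i)) + G.dist (g (w.getVert i)) (g a) = G.dist a (g a)
        rw [hd1, hd2, ← hw]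
        omega
      have := seg_getVert hT hmem hw
      rw [hd1] at this
      exact this
    rcases Nat.even_or_odd w.length with ⟨t, ht⟩ | ⟨t, ht⟩
    · have hk := key t (by omega)
      have : w.length - t = t := by omega
      rw [this] at hk
      have hell := ell_le g (w.getVert t)
      rw [hk, SimpleGraph.dist_self] at hell
      omega
    · have hadj : G.Adj (w.getVert t) (w.getVert (t+1)) := w.adj_getVert_succ (by omega)
      have hk1 := key t (by omega)
      have hk2 := key (t+1) (by omega)
      have e1 : w.length - t = t + 1 := by omega
      have e2 : w.length - (t+1) = t := by omega
      rw [e1] at hk1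
      rw [e2] at hk2
      exact hninv _ _ hadj ⟨hk1, hk2⟩

lemma displacement_lower (hT : G.IsTree) {h : G ≃g G} {a : V} {m : ℕ} (hm : 0 < m)
    (h1 : G.dist a (h a) = m) (h2 : G.dist a (h (h a)) = 2*m) (y : V) :
    m ≤ G.dist y (h y) := by
  have hc := hT.isConnected
  have pow_apply : ∀ (n : ℕ) (x : V), (h ^ (n+1)) x = h ((h ^ n) x) := by
    intro n x
    rw [pow_succ']
    rfl
  have pow_apply' : ∀ (n : ℕ) (x : V), (h ^ (n+1)) x = (h ^ n) (h x) := by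
    intro n x
    rw [pow_succ]
    rfl
  have A : ∀ n, G.dist a ((h ^ n) a) = n * m := by
    intro n
    induction n using Nat.strong_induction_on with
    | _ n ih =>
      match n with
      | 0 => simp [SimpleGraph.dist_self]
      | 1 => simpa [pow_one] using h1
      | 2 =>
        have : (h ^ 2) a = h (h a) := by rw [pow_apply, pow_one]
        rw [this, h2]
      | (n+3) =>
        have ihn1 : G.dist a ((h ^ (n+2)) a) = (n+2) * m := ih (n+2) (by omega)
        have ihn : G.dist a ((h ^ (n+1)) a) = (n+1) * m := ih (n+1) (by omega)
        have f1 : G.dist (h a) ((h ^ (n+3)) a) = (n+2) * m := by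
          have e : (h ^ (n+3)) a = h ((h ^ (n+2)) a) := pow_apply _ _
          rw [e, iso_dist hc h]
          exact ihn1
        have f2 : G.dist (h (h a)) ((h ^ (n+3)) a) = (n+1) * m := by
          have e : (h ^ (n+3)) a = h (h ((h ^ (n+1)) a)) := by
            rw [pow_apply (n+2), pow_apply (n+1)]
          rw [e, iso_dist hc h, iso_dist hc h]
          exact ihn
        have f3 : G.dist (h a) (h (h a)) = m := by rw [iso_dist hc h]; exact h1
        have hfp := four_point hT a (h (h a)) (h a) ((h ^ (n+3)) a)
        have htr : G.dist a ((h ^ (n+3)) a) ≤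
            G.dist a ((h ^ (n+2)) a) + G.dist ((h ^ (n+2)) a) ((h ^ (n+3)) a) :=
          hc.dist_triangle
        have f4 : G.dist ((h ^ (n+2)) a) ((h ^ (n+3)) a) = m := by
          have e : (h ^ (n+3)) a = (h ^ (n+2)) (h a) := pow_apply' _ _
          rw [e, iso_dist hc (h ^ (n+2))]
          exact h1
        have f5 : G.dist (h (h a)) (h a) = m := by rw [SimpleGraph.dist_comm]; exact f3
        have e1 : (n+1) * m = n*m + m := by ring
        have e2 : (n+2) * m = n*m + 2*m := by ring
        have e3 : (n+3) * m = n*m + 3*m := by ring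
        rcases le_max_iff.mp hfp with hcase | hcase <;> omega
  have B : ∀ n, G.dist y ((h ^ n) y) ≤ n * G.dist y (h y) := by
    intro n
    induction n with
    | zero => simp [SimpleGraph.dist_self]
    | succ n ihn =>
      have htr : G.dist y ((h ^ (n+1)) y) ≤
          G.dist y (h y) + G.dist (h y) ((h ^ (n+1)) y) := hc.dist_triangle
      have e : (h ^ (n+1)) y = h ((h ^ n) y) := pow_apply _ _
      have f : G.dist (h y) ((h ^ (n+1)) y) = G.dist y ((h ^ n) y) := by
        rw [e, iso_dist hc h]
      have e1 : (n+1) * G.dist y (h y) = n * G.dist y (h y) + G.dist y (h y) := by ring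
      omega
  have bound : ∀ n, n * m ≤ 2 * G.dist a y + n * G.dist y (h y) := by
    intro n
    have t1 : G.dist a ((h ^ n) a) ≤ G.dist a y + G.dist y ((h ^ n) a) := hc.dist_triangle
    have t2 : G.dist y ((h ^ n) a) ≤ G.dist y ((h ^ n) y) + G.dist ((h ^ n) y) ((h ^ n) a) :=
      hc.dist_triangle
    have t3 : G.dist ((h ^ n) y) ((h ^ n) a) = G.dist a y := by
      rw [iso_dist hc (h ^ n), SimpleGraph.dist_comm]
    have := B n
    have := A n
    omega
  by_contra hlt
  push_neg at hlt
  set d := G.dist y (h y) with hd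
  set D := G.dist a y with hD
  have hb := bound (2*D + 1)
  have hmul : (2*D+1) * (d+1) ≤ (2*D+1) * m := Nat.mul_le_mul_left _ (by omega)
  have e : (2*D+1) * (d+1) = (2*D+1)*d + 2*D + 1 := by ring
  omega

end TreeHelper

open TreeHelper

/-- Same-orientation overlap of length at least the minimum of the translation lengths,
with l(g₁) ≤ l(g₂): the square-replacement inequality. -/
theorem stmt14 (G : SimpleGraph V) (hT : G.IsTree) (g₁ g₂ : G ≃g G)
    (h₁ : noInv G g₁) (h₂ : noInv G g₂)
    (hyp₁ : 0 < ell G g₁) (hyp₂ : 0 < ell G g₂)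
    (p q : V)
    (hseg : seg G p q ⊆ axisSet G g₁ ∩ axisSet G g₂)
    (hd₁ : translatesToward G g₁ p q) (hd₂ : translatesToward G g₂ p q)
    (hΔ : min (ell G g₁) (ell G g₂) ≤ G.dist p q)
    (hle : ell G g₁ ≤ ell G g₂) :
    (ell G (g₁ * g₁ * g₂⁻¹) : ℤ) ≤ (ell G (g₁ * g₂) : ℤ) - (ell G g₁ : ℤ) := by
  have hc := hT.isConnected
  obtain ⟨hax1p, hax2p⟩ := hseg (mem_seg_left p q)
  have hp1 : G.dist p (g₁ p) = ell G g₁ := hax1p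
  have hp2 : G.dist p (g₂ p) = ell G g₂ := hax2p
  have hΔ1 : ell G g₁ ≤ G.dist p q := by
    rw [min_eq_left hle] at hΔ; exact hΔ
  have hd₁' : G.dist (g₁ p) q = G.dist p q - ell G g₁ := by
    have h : (G.dist (g₁ p) q : ℤ) = |(G.dist p q : ℤ) - (ell G g₁ : ℤ)| := hd₁
    rw [abs_of_nonneg (by push_cast; omega : (0:ℤ) ≤ (G.dist p q : ℤ) - (ell G g₁ : ℤ))] at h
    omega
  have hrseg : g₁ p ∈ seg G p q := by
    show G.dist p (g₁ p) + G.dist (g₁ p) q = G.dist p q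
    rw [hp1, hd₁']
    omega
  obtain ⟨hax1r, hax2r⟩ := hseg hrseg
  have hr1 : G.dist (g₁ p) (g₁ (g₁ p)) = ell G g₁ := hax1r
  have hr2 : G.dist (g₁ p) (g₂ (g₁ p)) = ell G g₂ := hax2r
  -- g₁ p lies between p and g₂ p
  have hF1 : G.dist p (g₁ p) + G.dist (g₁ p) (g₂ p) = G.dist p (g₂ p) := by
    rcases le_or_gt (ell G g₂) (G.dist p q) with hcase | hcase
    · have hd₂' : G.dist (g₂ p) q = G.dist p q - ell G g₂ := by
        have h : (G.dist (g₂ p) q : ℤ) = |(G.dist p q : ℤ) - (ell G g₂ : ℤ)| := hd₂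
        rw [abs_of_nonneg (by push_cast; omega : (0:ℤ) ≤ (G.dist p q : ℤ) - (ell G g₂ : ℤ))] at h
        omega
      have hg2seg : g₂ p ∈ seg G p q := by
        show G.dist p (g₂ p) + G.dist (g₂ p) q = G.dist p q
        rw [hp2, hd₂']
        omega
      exact seg_dist_sub hT hrseg hg2seg (by rw [hp1, hp2]; exact hle)
    · have hd₂' : G.dist (g₂ p) q = ell G g₂ - G.dist p q := by
        have h : (G.dist (g₂ p) q : ℤ) = |(G.dist p q : ℤ) - (ell G g₂ : ℤ)| := hd₂
        rw [abs_of_nonpos (by push_cast; omega : (G.dist p q : ℤ) - (ell G g₂ : ℤ) ≤ 0)] at h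
        omega
      have t1 : G.dist (g₁ p) (g₂ p) ≤ G.dist (g₁ p) q + G.dist q (g₂ p) :=
        hc.dist_triangle
      have t2 : G.dist p (g₂ p) ≤ G.dist p (g₁ p) + G.dist (g₁ p) (g₂ p) :=
        hc.dist_triangle
      have hrs : G.dist p (g₁ p) + G.dist (g₁ p) q = G.dist p q := hrseg
      have hcm : G.dist q (g₂ p) = G.dist (g₂ p) q := SimpleGraph.dist_comm
      omega
  have hdrg : G.dist (g₁ p) (g₂ p) = ell G g₂ - ell G g₁ := by omega
  -- F2a
  have hF2a : G.dist p (g₂ (g₁ p)) = ell G g₁ + ell G g₂ := by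
    rcases Nat.lt_or_ge (ell G g₁) (ell G g₂) with hlt | hge
    · have hmid : 0 < G.dist (g₁ p) (g₂ p) := by omega
      have hj2 : G.dist (g₁ p) (g₂ p) + G.dist (g₂ p) (g₂ (g₁ p)) =
          G.dist (g₁ p) (g₂ (g₁ p)) := by
        have e : G.dist (g₂ p) (g₂ (g₁ p)) = G.dist p (g₁ p) := iso_dist hc g₂ p (g₁ p)
        rw [e, hdrg, hp1, hr2]
        omega
      have hj := joint hT hmid hF1 hj2
      have e : G.dist (g₂ p) (g₂ (g₁ p)) = G.dist p (g₁ p) := iso_dist hc g₂ p (g₁ p)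
      rw [hj, e, hp1, hdrg]
      omega
    · have heq : ell G g₁ = ell G g₂ := le_antisymm hle hge
      have h0 : G.dist (g₁ p) (g₂ p) = 0 := by omega
      have hgg : g₁ p = g₂ p := hc.dist_eq_zero_iff.mp h0
      rw [hgg]
      have hsq := dist_sq hT h₂ hyp₂ hp2
      omega
  have h2l₁ : G.dist p (g₁ (g₁ p)) = 2 * ell G g₁ := dist_sq hT h₁ hyp₁ hp1
  have hshift : ∀ x : V, G.dist (g₂⁻¹ p) x = G.dist p (g₂ x) := by
    intro x
    rw [← iso_dist hc g₂ (g₂⁻¹ p) x, RelIso.apply_inv_self]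
  have hA1 : G.dist (g₂⁻¹ p) (g₁ p) = ell G g₁ + ell G g₂ := by
    rw [hshift]; exact hF2a
  have hap : G.dist (g₂⁻¹ p) p = ell G g₂ := by rw [hshift]; exact hp2
  have hJ1 := joint hT (by rw [hp1]; exact hyp₁)
      (by rw [hap, hp1, hA1]; omega :
        G.dist (g₂⁻¹ p) p + G.dist p (g₁ p) = G.dist (g₂⁻¹ p) (g₁ p))
      (by rw [hp1, hr1, h2l₁]; omega :
        G.dist p (g₁ p) + G.dist (g₁ p) (g₁ (g₁ p)) = G.dist p (g₁ (g₁ p)))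
  have hrw : G.dist (g₁ p) (g₁ (g₂ (g₁ p))) = ell G g₁ + ell G g₂ := by
    rw [iso_dist hc g₁]; exact hF2a
  have hgw : G.dist (g₁ (g₁ p)) (g₁ (g₂ (g₁ p))) = ell G g₂ := by
    rw [iso_dist hc g₁]; exact hr2
  have hJ2 := joint hT (by rw [hr1]; exact hyp₁)
      (by rw [hA1, hr1, hJ1, hap, hp1]; omega :
        G.dist (g₂⁻¹ p) (g₁ p) + G.dist (g₁ p) (g₁ (g₁ p)) = G.dist (g₂⁻¹ p) (g₁ (g₁ p)))
      (by rw [hr1, hgw, hrw] :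
        G.dist (g₁ p) (g₁ (g₁ p)) + G.dist (g₁ (g₁ p)) (g₁ (g₂ (g₁ p))) =
          G.dist (g₁ p) (g₁ (g₂ (g₁ p))))
  have happ1 : (g₁ * g₂) (g₂⁻¹ p) = g₁ p := by
    show g₁ (g₂ (g₂⁻¹ p)) = g₁ p
    rw [RelIso.apply_inv_self]
  have hlow := displacement_lower hT (h := g₁ * g₂) (a := g₂⁻¹ p) (m := ell G g₁ + ell G g₂)
      (by omega)
      (by rw [happ1]; exact hA1)
      (by
        have happ2 : (g₁ * g₂) ((g₁ * g₂) (g₂⁻¹ p)) = g₁ (g₂ (g₁ p)) := by rw [happ1]; rfl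
        rw [happ2, hJ2, hA1, hr1, hgw]
        ring)
  have hellh : ell G g₁ + ell G g₂ ≤ ell G (g₁ * g₂) := by
    refine le_csInf ⟨_, ⟨p, rfl⟩⟩ ?_
    rintro _ ⟨y, rfl⟩
    exact hlow y
  have hupp : ell G (g₁ * g₁ * g₂⁻¹) ≤ ell G g₂ := by
    have h0 := ell_le (G := G) (g₁ * g₁ * g₂⁻¹) (g₂ p)
    have happ3 : (g₁ * g₁ * g₂⁻¹) (g₂ p) = g₁ (g₁ p) := by
      show g₁ (g₁ (g₂⁻¹ (g₂ p))) = _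
      rw [RelIso.inv_apply_self]
    rw [happ3] at h0
    have t : G.dist (g₂ p) (g₁ (g₁ p)) ≤
        G.dist (g₂ p) (g₁ p) + G.dist (g₁ p) (g₁ (g₁ p)) := hc.dist_triangle
    have hcm : G.dist (g₂ p) (g₁ p) = G.dist (g₁ p) (g₂ p) := SimpleGraph.dist_comm
    omega
  omega
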